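/- Let σ_FS be the Borel probability measure on ℂ with density z ↦ 1/(π (1 + |z|²)²) with respect to Lebesgue measure, for t ≥ 0 let T_t(z) = e^{−t/2} z, and let K(z,w) := 2|z−w| / ( √(1+|z|²) · √(1+|w|²) ). There exists a constant C such that for all t ≥ 0: | −2 ∬_{ℂ×ℂ} log K(z,w) d((T_t)_*σ_FS)(z) d((T_t)_*σ_FS)(w) − t | ≤ C. -/

import Mathlib

open MeasureTheory
open scoped ENNReal

/-- The normalized Fubini–Study volume: the Borel probability measure on `ℂ` with density
`z ↦ 1/(π (1 + |z|²)²)` with respect to Lebesgue measure. -/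
noncomputable def sigmaFS : Measure ℂ :=
  volume.withDensity fun z => ENNReal.ofReal (1 / (Real.pi * (1 + ‖z‖ ^ 2) ^ 2))

namespace MobiusAux

open Real Set Metric

/-- The Fubini–Study density. -/
noncomputable def dens (z : ℂ) : ℝ := 1 / (Real.pi * (1 + ‖z‖ ^ 2) ^ 2)

lemma dens_pos (z : ℂ) : 0 < dens z := by
  unfold dens; positivity

lemma dens_le (z : ℂ) : dens z ≤ 1 / Real.pi := by
  unfold dens
  have h1 : (1:ℝ) ≤ (1 + ‖z‖ ^ 2) ^ 2 := by nlinarith [norm_nonneg z, sq_nonneg ‖z‖]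
  rw [div_le_div_iff₀ (by positivity) Real.pi_pos]
  nlinarith [Real.pi_pos]

lemma measurable_dens : Measurable dens := by
  unfold dens; fun_prop

lemma sigmaFS_def : sigmaFS = volume.withDensity fun z => ENNReal.ofReal (dens z) := rfl

lemma integrable_dens : Integrable dens (volume : Measure ℂ) := by
  have h : Integrable (fun x : ℂ => ((1:ℝ) + ‖x‖ ^ 2) ^ (-(4:ℝ) / 2)) (volume : Measure ℂ) := by
    refine integrable_rpow_neg_one_add_norm_sq ?_
    rw [Complex.finrank_real_complex]; norm_num
  have := h.const_mul (1 / Real.pi)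
  refine this.congr (Filter.Eventually.of_forall fun z => ?_)
  have hb : (0:ℝ) < 1 + ‖z‖ ^ 2 := by positivity
  have : ((1:ℝ) + ‖z‖ ^ 2) ^ (-(4:ℝ) / 2) = (((1:ℝ) + ‖z‖ ^ 2) ^ (2:ℕ))⁻¹ := by
    rw [show (-(4:ℝ) / 2) = -(2:ℕ) by norm_num, Real.rpow_neg hb.le, Real.rpow_natCast]
  simp only [this]
  unfold dens
  field_simp

lemma integral_radial :
    ∫ r in Ioi (0:ℝ), r * (1 / (Real.pi * (1 + r ^ 2) ^ 2)) = 1 / (2 * Real.pi) := by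
  have hπ : (0:ℝ) < Real.pi := Real.pi_pos
  set F : ℝ → ℝ := fun r => -(2 * Real.pi * (1 + r ^ 2))⁻¹ with hF
  have hderiv : ∀ r : ℝ, HasDerivAt F (r * (1 / (Real.pi * (1 + r ^ 2) ^ 2))) r := by
    intro r
    have h1 : HasDerivAt (fun r : ℝ => 1 + r ^ 2) (2 * r) r := by
      simpa using (hasDerivAt_pow 2 r).const_add 1
    have h2 : HasDerivAt (fun r : ℝ => 2 * Real.pi * (1 + r ^ 2)) (2 * Real.pi * (2 * r)) r :=
      h1.const_mul _
    have hne : 2 * Real.pi * (1 + r ^ 2) ≠ 0 := by positivity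
    have h3 : HasDerivAt F (-(-(2 * Real.pi * (2 * r)) / (2 * Real.pi * (1 + r ^ 2)) ^ 2)) r :=
      (h2.inv hne).neg
    convert h3 using 1
    have hb : (0:ℝ) < 1 + r ^ 2 := by positivity
    field_simp
  have hint : IntegrableOn (fun r : ℝ => r * (1 / (Real.pi * (1 + r ^ 2) ^ 2))) (Ioi 0) := by
    refine ((integrable_inv_one_add_sq.const_mul (1 / Real.pi)).integrableOn).mono'
      (Measurable.aestronglyMeasurable (by fun_prop)) ?_
    filter_upwards [ae_restrict_mem measurableSet_Ioi] with r (hr : (0:ℝ) < r)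
    have hb : (0:ℝ) < 1 + r ^ 2 := by positivity
    rw [Real.norm_of_nonneg (by positivity)]
    rw [div_mul_eq_mul_div, one_mul, mul_one_div]
    rw [div_le_div_iff₀ (by positivity) (by positivity)]
    have h4 : (1 + r ^ 2)⁻¹ * (Real.pi * (1 + r ^ 2) ^ 2) = Real.pi * (1 + r ^ 2) := by
      field_simp
    rw [h4]
    nlinarith [sq_nonneg (1 - r)]
  have htend : Filter.Tendsto F Filter.atTop (nhds 0) := by
    have h1 : Filter.Tendsto (fun r : ℝ => 2 * Real.pi * (1 + r ^ 2)) Filter.atTop Filter.atTop := by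
      refine Filter.Tendsto.const_mul_atTop (by positivity) ?_
      exact Filter.tendsto_atTop_add_const_left _ 1 (Filter.tendsto_pow_atTop two_ne_zero)
    simpa [hF] using (h1.inv_tendsto_atTop).neg
  have hcont : ContinuousWithinAt F (Ici 0) 0 := by
    apply Continuous.continuousWithinAt
    have : ∀ r : ℝ, 2 * Real.pi * (1 + r ^ 2) ≠ 0 := fun r => by positivity
    fun_prop (disch := intros; positivity)
  rw [MeasureTheory.integral_Ioi_of_hasDerivAt_of_tendsto hcont
    (fun x _ => hderiv x) hint htend]
  rw [hF]
  norm_num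

lemma integral_dens : ∫ z : ℂ, dens z = 1 := by
  have hπ : (0:ℝ) < Real.pi := Real.pi_pos
  calc
    ∫ z : ℂ, dens z
        = ∫ p in Ioi (0:ℝ) ×ˢ Ioo (-Real.pi) Real.pi,
            p.1 * (1 / (Real.pi * (1 + p.1 ^ 2) ^ 2)) := by
      rw [← Complex.integral_comp_polarCoord_symm (fun z => dens z), polarCoord_target]
      refine setIntegral_congr_fun (measurableSet_Ioi.prod measurableSet_Ioo) fun p _ => ?_
      unfold dens
      rw [smul_eq_mul, Complex.norm_polarCoord_symm, sq_abs]
    _ = (∫ r in Ioi (0:ℝ), r * (1 / (Real.pi * (1 + r ^ 2) ^ 2))) *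
          ∫ _ in Ioo (-Real.pi) Real.pi, (1:ℝ) := by
      rw [← setIntegral_prod_mul, Measure.volume_eq_prod]
      simp_rw [mul_one]
    _ = 1 := by
      rw [integral_radial]
      simp only [integral_const, MeasurableSet.univ, Measure.restrict_apply, Set.univ_inter,
        Real.volume_Ioo, smul_eq_mul, mul_one]
      simp only [Measure.real, Measure.restrict_apply MeasurableSet.univ, Set.univ_inter, Real.volume_Ioo]
      rw [ENNReal.toReal_ofReal (by linarith)]
      field_simp
      ring

instance : IsProbabilityMeasure sigmaFS := by
  constructor
  rw [sigmaFS_def, withDensity_apply _ MeasurableSet.univ, setLIntegral_univ]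
  rw [← ofReal_integral_eq_lintegral_ofReal integrable_dens
    (Filter.Eventually.of_forall fun z => (dens_pos z).le)]
  rw [integral_dens]
  simp

/-- Chordal bound: `‖z - w‖ ≤ √(1+‖z‖²) √(1+‖w‖²)`. -/
lemma norm_sub_le_sqrt_mul_sqrt (z w : ℂ) :
    ‖z - w‖ ≤ Real.sqrt (1 + ‖z‖ ^ 2) * Real.sqrt (1 + ‖w‖ ^ 2) := by
  have h1 : ‖z - w‖ ≤ ‖z‖ + ‖w‖ := norm_sub_le z w
  have h2 : (‖z‖ + ‖w‖) ^ 2 ≤ (1 + ‖z‖ ^ 2) * (1 + ‖w‖ ^ 2) := by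
    nlinarith [sq_nonneg (‖z‖ * ‖w‖ - 1), norm_nonneg z, norm_nonneg w]
  calc ‖z - w‖ ≤ ‖z‖ + ‖w‖ := h1
    _ = Real.sqrt ((‖z‖ + ‖w‖) ^ 2) := by
        rw [Real.sqrt_sq (by positivity)]
    _ ≤ Real.sqrt ((1 + ‖z‖ ^ 2) * (1 + ‖w‖ ^ 2)) := Real.sqrt_le_sqrt h2
    _ = Real.sqrt (1 + ‖z‖ ^ 2) * Real.sqrt (1 + ‖w‖ ^ 2) := Real.sqrt_mul (by positivity) _

/-- The kernel `log 2 - log K` is nonnegative. -/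
lemma kernel_nonneg (p : ℂ × ℂ) :
    0 ≤ Real.log 2 - Real.log (2 * ‖p.1 - p.2‖ /
      (Real.sqrt (1 + ‖p.1‖ ^ 2) * Real.sqrt (1 + ‖p.2‖ ^ 2))) := by
  set D := Real.sqrt (1 + ‖p.1‖ ^ 2) * Real.sqrt (1 + ‖p.2‖ ^ 2) with hD
  have hDpos : 0 < D := by positivity
  rcases eq_or_ne ‖p.1 - p.2‖ 0 with h | h
  · rw [h]
    simp [Real.log_nonneg one_le_two]
  · have hpos : 0 < ‖p.1 - p.2‖ := lt_of_le_of_ne (norm_nonneg _) (Ne.symm h)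
    have hratio : 2 * ‖p.1 - p.2‖ / D ≤ 2 := by
      rw [div_le_iff₀ hDpos]
      have := norm_sub_le_sqrt_mul_sqrt p.1 p.2
      nlinarith [hDpos]
    have : Real.log (2 * ‖p.1 - p.2‖ / D) ≤ Real.log 2 :=
      Real.log_le_log (by positivity) hratio
    linarith

/-- Key pointwise identity off the diagonal. -/
lemma kernel_eq {s : ℝ} (hs : 0 < s) {z w : ℂ} (hzw : z ≠ w) :
    Real.log 2 - Real.log (2 * ‖(s : ℂ) * z - (s : ℂ) * w‖ /
        (Real.sqrt (1 + ‖(s : ℂ) * z‖ ^ 2) * Real.sqrt (1 + ‖(s : ℂ) * w‖ ^ 2)))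
      = -Real.log s - Real.log ‖z - w‖
        + (1 / 2) * Real.log (1 + s ^ 2 * ‖z‖ ^ 2)
        + (1 / 2) * Real.log (1 + s ^ 2 * ‖w‖ ^ 2) := by
  have hr : (0:ℝ) < ‖z - w‖ := by
    rw [norm_pos_iff, sub_ne_zero]; exact hzw
  have hnum : ‖(s : ℂ) * z - (s : ℂ) * w‖ = s * ‖z - w‖ := by
    rw [← mul_sub, norm_mul, Complex.norm_real, Real.norm_of_nonneg hs.le]
  have hz2 : ‖(s : ℂ) * z‖ ^ 2 = s ^ 2 * ‖z‖ ^ 2 := by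
    rw [norm_mul, Complex.norm_real, Real.norm_of_nonneg hs.le, mul_pow]
  have hw2 : ‖(s : ℂ) * w‖ ^ 2 = s ^ 2 * ‖w‖ ^ 2 := by
    rw [norm_mul, Complex.norm_real, Real.norm_of_nonneg hs.le, mul_pow]
  rw [hnum, hz2, hw2]
  have ha : (0:ℝ) < 1 + s ^ 2 * ‖z‖ ^ 2 := by positivity
  have hb : (0:ℝ) < 1 + s ^ 2 * ‖w‖ ^ 2 := by positivity
  have hsa : (0:ℝ) < Real.sqrt (1 + s ^ 2 * ‖z‖ ^ 2) := Real.sqrt_pos.2 ha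
  have hsb : (0:ℝ) < Real.sqrt (1 + s ^ 2 * ‖w‖ ^ 2) := Real.sqrt_pos.2 hb
  rw [Real.log_div (by positivity) (by positivity),
    Real.log_mul (by norm_num) (by positivity),
    Real.log_mul hs.ne' hr.ne',
    Real.log_mul hsa.ne' hsb.ne',
    Real.log_sqrt ha.le, Real.log_sqrt hb.le]
  ring

/-- `log(1+‖z‖²)` is `σ`-integrable. -/
lemma measurable_q1 : Measurable (fun z : ℂ => Real.log (1 + ‖z‖ ^ 2)) :=
  Real.measurable_log.comp (measurable_const.add (measurable_norm.pow_const 2))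

lemma integrable_q1 : Integrable (fun z : ℂ => Real.log (1 + ‖z‖ ^ 2)) sigmaFS := by
  rw [sigmaFS_def, integrable_withDensity_iff (measurable_dens.ennreal_ofReal)
    (Filter.Eventually.of_forall fun z => ENNReal.ofReal_lt_top)]
  have hmaj : Integrable (fun z : ℂ => (8 / Real.pi) * (1 + ‖z‖) ^ (-(3:ℝ)))
      (volume : Measure ℂ) := by
    refine (integrable_one_add_norm ?_).const_mul _
    rw [Complex.finrank_real_complex]; norm_num
  refine hmaj.mono' (Measurable.aestronglyMeasurable
    (measurable_q1.mul ((measurable_dens.ennreal_ofReal).ennreal_toReal))) ?_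
  refine Filter.Eventually.of_forall fun z => ?_
  have hπ := Real.pi_pos
  have h0 : (0:ℝ) ≤ ‖z‖ := norm_nonneg z
  have h1 : (0:ℝ) < 1 + ‖z‖ := by linarith
  have hrpow : (1 + ‖z‖) ^ (-(3:ℝ)) = ((1 + ‖z‖) ^ (3:ℕ))⁻¹ := by
    rw [Real.rpow_neg h1.le, show ((3:ℝ)) = ((3:ℕ):ℝ) by norm_num, Real.rpow_natCast]
  have hq : Real.log (1 + ‖z‖ ^ 2) ≤ 2 * ‖z‖ := by
    have e1 : Real.log (1 + ‖z‖ ^ 2) ≤ Real.log ((1 + ‖z‖) ^ 2) := by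
      apply Real.log_le_log (by positivity)
      nlinarith
    have e2 : Real.log ((1 + ‖z‖) ^ 2) = 2 * Real.log (1 + ‖z‖) := by
      rw [Real.log_pow]; norm_num
    have e3 : Real.log (1 + ‖z‖) ≤ ‖z‖ := by
      have := Real.log_le_sub_one_of_pos h1
      linarith
    linarith
  have hqnn : 0 ≤ Real.log (1 + ‖z‖ ^ 2) := Real.log_nonneg (by nlinarith)
  have htoReal : (ENNReal.ofReal (dens z)).toReal = dens z :=
    ENNReal.toReal_ofReal (dens_pos z).le
  rw [Real.norm_of_nonneg (by rw [htoReal]; exact mul_nonneg hqnn (dens_pos z).le)]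
  rw [htoReal, hrpow]
  unfold dens
  have key : Real.log (1 + ‖z‖ ^ 2) * (1 / (Real.pi * (1 + ‖z‖ ^ 2) ^ 2))
      ≤ (2 * (1 + ‖z‖)) * (1 / (Real.pi * ((1 + ‖z‖) ^ 4 / 4))) := by
    apply mul_le_mul (by linarith) ?_ (by positivity) (by positivity)
    apply one_div_le_one_div_of_le (by positivity)
    have hd2 : (1 + ‖z‖) ^ 4 / 4 ≤ (1 + ‖z‖ ^ 2) ^ 2 := by nlinarith [sq_nonneg (1 - ‖z‖)]
    nlinarith
  refine key.trans (le_of_eq ?_)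
  field_simp
  ring

lemma integrable_qs {s : ℝ} (hs0 : 0 ≤ s) (hs1 : s ≤ 1) :
    Integrable (fun z : ℂ => Real.log (1 + s ^ 2 * ‖z‖ ^ 2)) sigmaFS := by
  refine integrable_q1.mono' (Measurable.aestronglyMeasurable
    (Real.measurable_log.comp (measurable_const.add
      ((measurable_norm.pow_const 2).const_mul _))))
    (Filter.Eventually.of_forall fun z => ?_)
  have hs2 : s ^ 2 ≤ 1 := by nlinarith
  have h0 : (0:ℝ) ≤ s ^ 2 * ‖z‖ ^ 2 := by positivity
  have hmono : s ^ 2 * ‖z‖ ^ 2 ≤ ‖z‖ ^ 2 := by nlinarith [sq_nonneg ‖z‖]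
  rw [Real.norm_of_nonneg (Real.log_nonneg (by linarith))]
  exact Real.log_le_log (by linarith) (by linarith)

lemma qs_nonneg {s : ℝ} (z : ℂ) : 0 ≤ Real.log (1 + s ^ 2 * ‖z‖ ^ 2) :=
  Real.log_nonneg (by nlinarith [sq_nonneg s, sq_nonneg ‖z‖, sq_nonneg (s*‖z‖)])

lemma integral_qs_le {s : ℝ} (hs0 : 0 ≤ s) (hs1 : s ≤ 1) :
    ∫ z : ℂ, Real.log (1 + s ^ 2 * ‖z‖ ^ 2) ∂sigmaFS
      ≤ ∫ z : ℂ, Real.log (1 + ‖z‖ ^ 2) ∂sigmaFS := by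
  refine integral_mono (integrable_qs hs0 hs1) integrable_q1 fun z => ?_
  have hs2 : s ^ 2 ≤ 1 := by nlinarith
  have hmono : s ^ 2 * ‖z‖ ^ 2 ≤ ‖z‖ ^ 2 := by nlinarith [sq_nonneg ‖z‖]
  exact Real.log_le_log (by positivity) (by linarith)

lemma diag_null : (sigmaFS.prod sigmaFS) {p : ℂ × ℂ | p.1 = p.2} = 0 := by
  have hD : MeasurableSet {p : ℂ × ℂ | p.1 = p.2} :=
    measurableSet_eq_fun measurable_fst measurable_snd
  rw [Measure.prod_apply hD]
  have h0 : ∀ z : ℂ, sigmaFS (Prod.mk z ⁻¹' {p : ℂ × ℂ | p.1 = p.2}) = 0 := by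
    intro z
    have he : (Prod.mk z ⁻¹' {p : ℂ × ℂ | p.1 = p.2}) = {z} := by
      ext w; simp [eq_comm]
    rw [he]
    exact (withDensity_absolutelyContinuous volume _) (measure_singleton z)
  have h1 : ∀ z : ℂ, sigmaFS {z} = 0 := fun z =>
    (withDensity_absolutelyContinuous volume _) (measure_singleton z)
  simp [h0, h1]

lemma ae_offdiag : ∀ᵐ p ∂(sigmaFS.prod sigmaFS), p.1 ≠ p.2 := by
  rw [ae_iff]
  simpa [not_not] using diag_null

lemma c0_lt_top : ∫⁻ u in ball (0:ℂ) 1, ENNReal.ofReal ‖u‖⁻¹ ∂volume < ∞ := by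
  have hnn : 0 ≤ᵐ[volume.restrict (ball (0:ℂ) 1)] fun u : ℂ => ‖u‖⁻¹ :=
    Filter.Eventually.of_forall fun u => by positivity
  have hmble : AEMeasurable (fun u : ℂ => ‖u‖⁻¹) (volume.restrict (ball (0:ℂ) 1)) :=
    measurable_norm.inv.aemeasurable
  rw [lintegral_eq_lintegral_meas_lt _ hnn hmble]
  have hbound : ∀ t ∈ Ioi (0:ℝ),
      (volume.restrict (ball (0:ℂ) 1)) {u : ℂ | t < ‖u‖⁻¹}
        ≤ ENNReal.ofReal (min 1 t⁻¹) ^ 2 * NNReal.pi := by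
    intro t ht
    rw [Measure.restrict_apply' measurableSet_ball]
    have hsub : {u : ℂ | t < ‖u‖⁻¹} ∩ ball (0:ℂ) 1 ⊆ ball (0:ℂ) (min 1 t⁻¹) := by
      rintro u ⟨hu1, hu2⟩
      simp only [Set.mem_setOf_eq] at hu1
      simp only [mem_ball, dist_zero_right] at hu2 ⊢
      rcases eq_or_ne u 0 with rfl | hu0
      · simp only [norm_zero]
        exact lt_min one_pos (inv_pos.mpr (mem_Ioi.mp ht))
      · have hnu : (0:ℝ) < ‖u‖ := norm_pos_iff.mpr hu0
        have h2 : ‖u‖ < t⁻¹ := by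
          have := inv_strictAnti₀ (mem_Ioi.mp ht) hu1
          rwa [inv_inv] at this
        exact lt_min hu2 h2
    calc volume ({u : ℂ | t < ‖u‖⁻¹} ∩ ball (0:ℂ) 1)
        ≤ volume (ball (0:ℂ) (min 1 t⁻¹)) := measure_mono hsub
      _ = ENNReal.ofReal (min 1 t⁻¹) ^ 2 * NNReal.pi := Complex.volume_ball _ _
  have hmono : ∫⁻ t in Ioi (0:ℝ), (volume.restrict (ball (0:ℂ) 1)) {u : ℂ | t < ‖u‖⁻¹}
      ≤ ∫⁻ t in Ioi (0:ℝ), ENNReal.ofReal (min 1 t⁻¹) ^ 2 * NNReal.pi := by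
    refine setLIntegral_mono (by fun_prop) hbound
  refine lt_of_le_of_lt hmono ?_
  rw [← Set.Ioc_union_Ioi_eq_Ioi (zero_le_one (α := ℝ)),
    lintegral_union measurableSet_Ioi (Set.Ioc_disjoint_Ioi le_rfl)]
  have h1 : ∫⁻ t in Set.Ioc (0:ℝ) 1, ENNReal.ofReal (min 1 t⁻¹) ^ 2 * NNReal.pi
      ≤ NNReal.pi * volume (Set.Ioc (0:ℝ) 1) := by
    rw [← setLIntegral_const]
    refine setLIntegral_mono (by fun_prop) fun t _ => ?_
    have : ENNReal.ofReal (min 1 t⁻¹) ≤ 1 := by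
      rw [show (1:ℝ≥0∞) = ENNReal.ofReal 1 by simp]
      exact ENNReal.ofReal_le_ofReal (min_le_left _ _)
    calc ENNReal.ofReal (min 1 t⁻¹) ^ 2 * NNReal.pi ≤ 1 ^ 2 * NNReal.pi := by
          gcongr
      _ = (NNReal.pi : ℝ≥0∞) := by simp
  have h2 : ∫⁻ t in Set.Ioi (1:ℝ), ENNReal.ofReal (min 1 t⁻¹) ^ 2 * NNReal.pi < ∞ := by
    have heq : ∫⁻ t in Set.Ioi (1:ℝ), ENNReal.ofReal (min 1 t⁻¹) ^ 2 * NNReal.pi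
        = ∫⁻ t in Set.Ioi (1:ℝ), (‖t ^ (-2:ℝ)‖₊ : ℝ≥0∞) * NNReal.pi := by
      refine setLIntegral_congr_fun measurableSet_Ioi
        (fun t (ht : (1:ℝ) < t) => ?_)
      have ht0 : (0:ℝ) < t := lt_trans one_pos ht
      have hmin : min 1 t⁻¹ = t⁻¹ := min_eq_right (by
        rw [inv_le_one_iff₀]; right; exact ht.le)
      rw [hmin, ← ENNReal.ofReal_pow (by positivity),
        ← enorm_eq_nnnorm, Real.enorm_eq_ofReal (Real.rpow_nonneg ht0.le _)]
      congr 1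
      rw [Real.rpow_neg ht0.le, show ((2:ℝ)) = ((2:ℕ):ℝ) by norm_num, Real.rpow_natCast,
        inv_pow]
    rw [heq, lintegral_mul_const _ (by fun_prop)]
    have hint : IntegrableOn (fun t : ℝ => t ^ (-2:ℝ)) (Set.Ioi 1) :=
      integrableOn_Ioi_rpow_of_lt (by norm_num) one_pos
    have hfin := hint.2
    exact ENNReal.mul_lt_top hfin (ENNReal.coe_lt_top)
  refine ENNReal.add_lt_top.mpr ⟨lt_of_le_of_lt h1 ?_, h2⟩
  rw [Real.volume_Ioc]
  exact ENNReal.mul_lt_top ENNReal.coe_lt_top ENNReal.ofReal_lt_top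

lemma lintegral_inv_lt_top :
    ∫⁻ p : ℂ × ℂ, ENNReal.ofReal ‖p.1 - p.2‖⁻¹ ∂(sigmaFS.prod sigmaFS) < ∞ := by
  set χ : ℂ → ℝ≥0∞ := (ball (0:ℂ) 1).indicator (fun u => ENNReal.ofReal ‖u‖⁻¹) with hχ
  have hχm : Measurable χ :=
    Measurable.indicator (measurable_norm.inv.ennreal_ofReal) measurableSet_ball
  have hpt : ∀ p : ℂ × ℂ, ENNReal.ofReal ‖p.1 - p.2‖⁻¹ ≤ 1 + χ (p.1 - p.2) := by
    intro p
    by_cases h : ‖p.1 - p.2‖ < 1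
    · have he : χ (p.1 - p.2) = ENNReal.ofReal ‖p.1 - p.2‖⁻¹ :=
        Set.indicator_of_mem (by simpa [mem_ball, dist_zero_right] using h) _
      rw [he]
      exact le_add_self
    · push_neg at h
      have h1 : ‖p.1 - p.2‖⁻¹ ≤ 1 := inv_le_one_of_one_le₀ h
      calc ENNReal.ofReal ‖p.1 - p.2‖⁻¹ ≤ ENNReal.ofReal 1 := ENNReal.ofReal_le_ofReal h1
        _ = 1 := by simp
        _ ≤ 1 + χ (p.1 - p.2) := le_self_add
  have hχcomp : Measurable fun p : ℂ × ℂ => χ (p.1 - p.2) :=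
    hχm.comp (measurable_fst.sub measurable_snd)
  have hbig : ∫⁻ p : ℂ × ℂ, χ (p.1 - p.2) ∂(sigmaFS.prod sigmaFS)
      ≤ ENNReal.ofReal (1 / Real.pi) * ∫⁻ u in ball (0:ℂ) 1, ENNReal.ofReal ‖u‖⁻¹ ∂volume := by
    rw [lintegral_prod_symm _ hχcomp.aemeasurable]
    have hinner : ∀ w : ℂ, ∫⁻ z, χ (z - w) ∂sigmaFS
        ≤ ENNReal.ofReal (1 / Real.pi) * ∫⁻ u in ball (0:ℂ) 1, ENNReal.ofReal ‖u‖⁻¹ ∂volume := by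
      intro w
      have hχw : Measurable fun z : ℂ => χ (z - w) := hχm.comp (measurable_sub_const w)
      rw [sigmaFS_def, lintegral_withDensity_eq_lintegral_mul volume
        measurable_dens.ennreal_ofReal hχw]
      have hle : ∫⁻ z, (fun z => ENNReal.ofReal (dens z)) z * χ (z - w) ∂volume
          ≤ ∫⁻ z, ENNReal.ofReal (1 / Real.pi) * χ (z - w) ∂volume := by
        refine lintegral_mono fun z => ?_
        exact mul_le_mul_left (ENNReal.ofReal_le_ofReal (dens_le z)) _
      refine le_trans (le_of_eq (by rfl)) (hle.trans ?_)
      rw [lintegral_const_mul _ hχw]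
      have htrans : ∫⁻ z, χ (z - w) ∂volume = ∫⁻ u, χ u ∂volume := by
        simp_rw [sub_eq_add_neg]
        exact lintegral_add_right_eq_self χ (-w)
      rw [htrans, hχ, lintegral_indicator measurableSet_ball]
    calc ∫⁻ w, ∫⁻ z, χ (z - w) ∂sigmaFS ∂sigmaFS
        ≤ ∫⁻ _, (ENNReal.ofReal (1 / Real.pi)
            * ∫⁻ u in ball (0:ℂ) 1, ENNReal.ofReal ‖u‖⁻¹ ∂volume) ∂sigmaFS :=
          lintegral_mono fun w => hinner w
      _ = ENNReal.ofReal (1 / Real.pi)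
            * ∫⁻ u in ball (0:ℂ) 1, ENNReal.ofReal ‖u‖⁻¹ ∂volume := by
          rw [lintegral_const, measure_univ, mul_one]
  calc ∫⁻ p : ℂ × ℂ, ENNReal.ofReal ‖p.1 - p.2‖⁻¹ ∂(sigmaFS.prod sigmaFS)
      ≤ ∫⁻ p : ℂ × ℂ, (1 + χ (p.1 - p.2)) ∂(sigmaFS.prod sigmaFS) := lintegral_mono hpt
    _ = (sigmaFS.prod sigmaFS) Set.univ + ∫⁻ p : ℂ × ℂ, χ (p.1 - p.2) ∂(sigmaFS.prod sigmaFS) := by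
        rw [lintegral_add_left measurable_const, lintegral_const, one_mul]
    _ < ∞ := by
        refine ENNReal.add_lt_top.mpr ⟨?_, lt_of_le_of_lt hbig ?_⟩
        · simp [measure_univ]
        · exact ENNReal.mul_lt_top ENNReal.ofReal_lt_top c0_lt_top

lemma integrable_inv_norm_sub :
    Integrable (fun p : ℂ × ℂ => ‖p.1 - p.2‖⁻¹) (sigmaFS.prod sigmaFS) := by
  refine ⟨((measurable_fst.sub measurable_snd).norm.inv).aestronglyMeasurable, ?_⟩
  rw [hasFiniteIntegral_iff_norm]
  have heq : ∀ p : ℂ × ℂ, ENNReal.ofReal ‖‖p.1 - p.2‖⁻¹‖ = ENNReal.ofReal ‖p.1 - p.2‖⁻¹ := by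
    intro p
    rw [Real.norm_of_nonneg (by positivity)]
  simp_rw [heq]
  exact lintegral_inv_lt_top

lemma integrable_log_norm_sub :
    Integrable (fun p : ℂ × ℂ => Real.log ‖p.1 - p.2‖) (sigmaFS.prod sigmaFS) := by
  have hq1fst : Integrable (fun p : ℂ × ℂ => Real.log (1 + ‖p.1‖ ^ 2))
      (sigmaFS.prod sigmaFS) := by
    have h := integrable_q1.mul_prod (integrable_const (μ := sigmaFS) (1:ℝ))
    simpa using h
  have hq1snd : Integrable (fun p : ℂ × ℂ => Real.log (1 + ‖p.2‖ ^ 2))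
      (sigmaFS.prod sigmaFS) := by
    have h := (integrable_const (μ := sigmaFS) (1:ℝ)).mul_prod integrable_q1
    simpa using h
  have hD : Integrable (fun p : ℂ × ℂ =>
      ‖p.1 - p.2‖⁻¹ + (Real.log (1 + ‖p.1‖ ^ 2) + Real.log (1 + ‖p.2‖ ^ 2)))
      (sigmaFS.prod sigmaFS) := integrable_inv_norm_sub.add (hq1fst.add hq1snd)
  refine hD.mono' (Measurable.aestronglyMeasurable
    (Real.measurable_log.comp (measurable_fst.sub measurable_snd).norm))
    (Filter.Eventually.of_forall fun p => ?_)
  have hq1 : (0:ℝ) ≤ Real.log (1 + ‖p.1‖ ^ 2) := Real.log_nonneg (by nlinarith [sq_nonneg ‖p.1‖])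
  have hq2 : (0:ℝ) ≤ Real.log (1 + ‖p.2‖ ^ 2) := Real.log_nonneg (by nlinarith [sq_nonneg ‖p.2‖])
  rcases eq_or_lt_of_le (norm_nonneg (p.1 - p.2)) with h0 | hpos
  · rw [← h0]
    simp only [Real.log_zero, norm_zero, Real.norm_of_nonneg (le_refl (0:ℝ))]
    positivity
  rw [Real.norm_eq_abs]
  rcases lt_or_ge ‖p.1 - p.2‖ 1 with h | h
  · -- small case : |log r| = - log r ≤ r⁻¹
    have hlogneg : Real.log ‖p.1 - p.2‖ ≤ 0 := Real.log_nonpos (norm_nonneg _) h.le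
    rw [abs_of_nonpos hlogneg]
    have hbnd : -Real.log ‖p.1 - p.2‖ ≤ ‖p.1 - p.2‖⁻¹ := by
      have := Real.log_le_sub_one_of_pos (inv_pos.mpr hpos)
      rw [Real.log_inv] at this
      linarith [inv_pos.mpr hpos]
    have hinv : (0:ℝ) ≤ ‖p.1 - p.2‖⁻¹ := by positivity
    linarith
  · -- large case : |log r| = log r ≤ log a + log b
    have hlogpos : 0 ≤ Real.log ‖p.1 - p.2‖ := Real.log_nonneg h
    rw [abs_of_nonneg hlogpos]
    have hbnd : Real.log ‖p.1 - p.2‖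
        ≤ Real.log (Real.sqrt (1 + ‖p.1‖ ^ 2) * Real.sqrt (1 + ‖p.2‖ ^ 2)) :=
      Real.log_le_log hpos (norm_sub_le_sqrt_mul_sqrt p.1 p.2)
    have ha : (0:ℝ) < 1 + ‖p.1‖ ^ 2 := by positivity
    have hb : (0:ℝ) < 1 + ‖p.2‖ ^ 2 := by positivity
    rw [Real.log_mul (Real.sqrt_pos.mpr ha).ne' (Real.sqrt_pos.mpr hb).ne',
      Real.log_sqrt ha.le, Real.log_sqrt hb.le] at hbnd
    have hinv : (0:ℝ) ≤ ‖p.1 - p.2‖⁻¹ := by positivity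
    linarith

lemma main_eq (t : ℝ) (ht : 0 ≤ t) :
    (∫⁻ p : ℂ × ℂ, ENNReal.ofReal (Real.log 2 -
        Real.log (2 * ‖p.1 - p.2‖ /
          (Real.sqrt (1 + ‖p.1‖ ^ 2) * Real.sqrt (1 + ‖p.2‖ ^ 2))))
      ∂((sigmaFS.map fun z => (Real.exp (-t / 2) : ℂ) * z).prod
        (sigmaFS.map fun z => (Real.exp (-t / 2) : ℂ) * z)))
      = ENNReal.ofReal (t / 2
          - (∫ p : ℂ × ℂ, Real.log ‖p.1 - p.2‖ ∂(sigmaFS.prod sigmaFS))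
          + ∫ z : ℂ, Real.log (1 + Real.exp (-t / 2) ^ 2 * ‖z‖ ^ 2) ∂sigmaFS)
    ∧ 0 ≤ t / 2 - (∫ p : ℂ × ℂ, Real.log ‖p.1 - p.2‖ ∂(sigmaFS.prod sigmaFS))
          + ∫ z : ℂ, Real.log (1 + Real.exp (-t / 2) ^ 2 * ‖z‖ ^ 2) ∂sigmaFS := by
  set s : ℝ := Real.exp (-t / 2) with hs_def
  have hs0 : 0 < s := Real.exp_pos _
  have hs1 : s ≤ 1 := by
    rw [hs_def]
    exact Real.exp_le_one_iff.mpr (by linarith)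
  set m : ℂ → ℂ := fun z => (s : ℂ) * z with hm_def
  have hm : Measurable m := measurable_id.const_mul _
  set H : ℂ × ℂ → ℝ := fun p => t / 2 - Real.log ‖p.1 - p.2‖
      + 1 / 2 * Real.log (1 + s ^ 2 * ‖p.1‖ ^ 2)
      + 1 / 2 * Real.log (1 + s ^ 2 * ‖p.2‖ ^ 2) with hH_def
  -- measurability of the kernel
  have hd1 : Measurable fun p : ℂ × ℂ => Real.sqrt (1 + ‖p.1‖ ^ 2) :=
    Real.continuous_sqrt.measurable.comp (measurable_const.add (measurable_fst.norm.pow_const 2))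
  have hd2 : Measurable fun p : ℂ × ℂ => Real.sqrt (1 + ‖p.2‖ ^ 2) :=
    Real.continuous_sqrt.measurable.comp (measurable_const.add (measurable_snd.norm.pow_const 2))
  have hnum : Measurable fun p : ℂ × ℂ => 2 * ‖p.1 - p.2‖ :=
    ((measurable_fst.sub measurable_snd).norm).const_mul 2
  have hΦ : Measurable fun p : ℂ × ℂ => ENNReal.ofReal (Real.log 2 -
      Real.log (2 * ‖p.1 - p.2‖ /
        (Real.sqrt (1 + ‖p.1‖ ^ 2) * Real.sqrt (1 + ‖p.2‖ ^ 2)))) :=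
    (measurable_const.sub (Real.measurable_log.comp (hnum.div (hd1.mul hd2)))).ennreal_ofReal
  -- pointwise identity off the diagonal
  have key : ∀ p : ℂ × ℂ, p.1 ≠ p.2 → Real.log 2 -
      Real.log (2 * ‖m p.1 - m p.2‖ /
        (Real.sqrt (1 + ‖m p.1‖ ^ 2) * Real.sqrt (1 + ‖m p.2‖ ^ 2))) = H p := by
    intro p hp
    have h := kernel_eq hs0 hp
    rw [show m p.1 = (s : ℂ) * p.1 from rfl, show m p.2 = (s : ℂ) * p.2 from rfl, h,
      hH_def]
    have hlog : Real.log s = -t / 2 := by rw [hs_def, Real.log_exp]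
    rw [hlog]
    ring
  have hHnn : 0 ≤ᵐ[sigmaFS.prod sigmaFS] H := by
    filter_upwards [ae_offdiag] with p hp
    rw [← key p hp]
    exact kernel_nonneg ((s : ℂ) * p.1, (s : ℂ) * p.2)
  -- integrability of H
  have hIlog := integrable_log_norm_sub
  have hqs := integrable_qs hs0.le hs1
  have hq_fst : Integrable (fun p : ℂ × ℂ => 1 / 2 * Real.log (1 + s ^ 2 * ‖p.1‖ ^ 2))
      (sigmaFS.prod sigmaFS) := by
    have h := (hqs.mul_prod (integrable_const (μ := sigmaFS) (1:ℝ))).const_mul (1 / 2)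
    simpa [mul_one] using h
  have hq_snd : Integrable (fun p : ℂ × ℂ => 1 / 2 * Real.log (1 + s ^ 2 * ‖p.2‖ ^ 2))
      (sigmaFS.prod sigmaFS) := by
    have h := ((integrable_const (μ := sigmaFS) (1:ℝ)).mul_prod hqs).const_mul (1 / 2)
    simpa [one_mul] using h
  have hH : Integrable H (sigmaFS.prod sigmaFS) :=
    (((integrable_const (t / 2)).sub hIlog).add hq_fst).add hq_snd
  -- value of the integral of H
  have e1 : ∫ p : ℂ × ℂ, 1 / 2 * Real.log (1 + s ^ 2 * ‖p.1‖ ^ 2) ∂(sigmaFS.prod sigmaFS)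
      = 1 / 2 * ∫ z : ℂ, Real.log (1 + s ^ 2 * ‖z‖ ^ 2) ∂sigmaFS := by
    rw [integral_const_mul]
    congr 1
    have h2 := integral_prod_mul (μ := sigmaFS) (ν := sigmaFS)
      (f := fun z : ℂ => Real.log (1 + s ^ 2 * ‖z‖ ^ 2)) (g := fun _ : ℂ => (1:ℝ))
    simpa [measure_univ] using h2
  have e2 : ∫ p : ℂ × ℂ, 1 / 2 * Real.log (1 + s ^ 2 * ‖p.2‖ ^ 2) ∂(sigmaFS.prod sigmaFS)
      = 1 / 2 * ∫ z : ℂ, Real.log (1 + s ^ 2 * ‖z‖ ^ 2) ∂sigmaFS := by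
    rw [integral_const_mul]
    congr 1
    have h2 := integral_prod_mul (μ := sigmaFS) (ν := sigmaFS)
      (f := fun _ : ℂ => (1:ℝ)) (g := fun z : ℂ => Real.log (1 + s ^ 2 * ‖z‖ ^ 2))
    simpa [measure_univ] using h2
  have hval : ∫ p : ℂ × ℂ, H p ∂(sigmaFS.prod sigmaFS)
      = t / 2 - (∫ p : ℂ × ℂ, Real.log ‖p.1 - p.2‖ ∂(sigmaFS.prod sigmaFS))
        + ∫ z : ℂ, Real.log (1 + s ^ 2 * ‖z‖ ^ 2) ∂sigmaFS := by
    simp only [hH_def]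
    have hf2 : Integrable (fun p : ℂ × ℂ => t / 2 - Real.log ‖p.1 - p.2‖)
        (sigmaFS.prod sigmaFS) := (integrable_const (t / 2)).sub hIlog
    have hf3 : Integrable (fun p : ℂ × ℂ => t / 2 - Real.log ‖p.1 - p.2‖
        + 1 / 2 * Real.log (1 + s ^ 2 * ‖p.1‖ ^ 2)) (sigmaFS.prod sigmaFS) := hf2.add hq_fst
    rw [integral_add hf3 hq_snd, integral_add hf2 hq_fst,
      integral_sub (integrable_const (t / 2)) hIlog, integral_const]
    rw [e1, e2]
    simp [measure_univ]
    ring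
  constructor
  · -- the main computation of the lintegral
    rw [Measure.map_prod_map _ _ hm hm, lintegral_map hΦ (hm.prodMap hm)]
    have hcong : ∫⁻ p : ℂ × ℂ, ENNReal.ofReal (Real.log 2 -
        Real.log (2 * ‖(Prod.map m m p).1 - (Prod.map m m p).2‖ /
          (Real.sqrt (1 + ‖(Prod.map m m p).1‖ ^ 2) *
            Real.sqrt (1 + ‖(Prod.map m m p).2‖ ^ 2)))) ∂(sigmaFS.prod sigmaFS)
        = ∫⁻ p : ℂ × ℂ, ENNReal.ofReal (H p) ∂(sigmaFS.prod sigmaFS) := by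
      refine lintegral_congr_ae ?_
      filter_upwards [ae_offdiag] with p hp
      have h1 : (Prod.map m m p).1 = m p.1 := rfl
      have h2 : (Prod.map m m p).2 = m p.2 := rfl
      rw [h1, h2]
      exact congrArg ENNReal.ofReal (key p hp)
    rw [hcong, ← ofReal_integral_eq_lintegral_ofReal hH hHnn, hval]
  · rw [← hval]
    exact integral_nonneg_of_ae hHnn

end MobiusAux

theorem mobius_energy_growth :
    ∃ C : ℝ, ∀ t : ℝ, 0 ≤ t →
      let μt := sigmaFS.map fun z => (Real.exp (-t / 2) : ℂ) * z
      let L := ∫⁻ p : ℂ × ℂ,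
        ENNReal.ofReal (Real.log 2 -
          Real.log (2 * ‖p.1 - p.2‖ /
            (Real.sqrt (1 + ‖p.1‖ ^ 2) * Real.sqrt (1 + ‖p.2‖ ^ 2)))) ∂(μt.prod μt)
      L ≠ ∞ ∧ |2 * L.toReal - 2 * Real.log 2 - t| ≤ C := by
  refine ⟨2 * |∫ p : ℂ × ℂ, Real.log ‖p.1 - p.2‖ ∂(sigmaFS.prod sigmaFS)|
    + 2 * (∫ z : ℂ, Real.log (1 + ‖z‖ ^ 2) ∂sigmaFS) + 2 * Real.log 2, fun t ht => ?_⟩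
  intro μt L
  obtain ⟨heq, hnn⟩ := MobiusAux.main_eq t ht
  have hL : L = ENNReal.ofReal (t / 2
      - (∫ p : ℂ × ℂ, Real.log ‖p.1 - p.2‖ ∂(sigmaFS.prod sigmaFS))
      + ∫ z : ℂ, Real.log (1 + Real.exp (-t / 2) ^ 2 * ‖z‖ ^ 2) ∂sigmaFS) := heq
  constructor
  · rw [hL]; exact ENNReal.ofReal_ne_top
  · rw [hL, ENNReal.toReal_ofReal hnn]
    set I := ∫ p : ℂ × ℂ, Real.log ‖p.1 - p.2‖ ∂(sigmaFS.prod sigmaFS) with hI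
    set Q := ∫ z : ℂ, Real.log (1 + Real.exp (-t / 2) ^ 2 * ‖z‖ ^ 2) ∂sigmaFS with hQ
    set A := ∫ z : ℂ, Real.log (1 + ‖z‖ ^ 2) ∂sigmaFS with hA
    have hQ0 : 0 ≤ Q := integral_nonneg fun z => MobiusAux.qs_nonneg z
    have hQA : Q ≤ A :=
      MobiusAux.integral_qs_le (Real.exp_pos _).le
        (Real.exp_le_one_iff.mpr (by linarith : -t / 2 ≤ 0))
    have hlog2 : (0:ℝ) ≤ Real.log 2 := Real.log_nonneg one_le_two
    rw [abs_le]
    constructor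
    · linarith [le_abs_self I]
    · linarith [neg_abs_le I]
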